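/- Let G be a connected finite unweighted graph with pl(G) ≤ λ, where λ ≥ 1. Then the (2λ−1)-power G^{2λ−1} of G is AT-free. -/

import Mathlib

open SimpleGraph

variable {V : Type*}

/-- A path-decomposition of `G`: a finite sequence of bags `X 0, …, X (q-1)` such that
every vertex is in some bag, every edge has both ends in some bag, and
`X i ∩ X k ⊆ X j` whenever `i ≤ j ≤ k`. -/
def IsPathDecomp (G : SimpleGraph V) {q : ℕ} (X : Fin q → Set V) : Prop :=
  (∀ v : V, ∃ i, v ∈ X i) ∧
  (∀ u v : V, G.Adj u v → ∃ i, u ∈ X i ∧ v ∈ X i) ∧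
  (∀ i j k : Fin q, i ≤ j → j ≤ k → X i ∩ X k ⊆ X j)

/-- The length of the path-decomposition `X` is at most `l`:
every two vertices in a common bag are at distance at most `l` in `G`. -/
def DecompLengthLE (G : SimpleGraph V) {q : ℕ} (X : Fin q → Set V) (l : ℕ) : Prop :=
  ∀ i, ∀ u ∈ X i, ∀ v ∈ X i, G.dist u v ≤ l

/-- The breadth of the path-decomposition `X` is at most `r`:
every bag is contained in a disk of radius `r` of `G`. -/
def DecompBreadthLE (G : SimpleGraph V) {q : ℕ} (X : Fin q → Set V) (r : ℕ) : Prop :=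
  ∀ i, ∃ c : V, ∀ u ∈ X i, G.dist c u ≤ r

/-- The path-length `pl(G)`: minimum length over all path-decompositions of `G`. -/
noncomputable def pathLength (G : SimpleGraph V) : ℕ :=
  sInf {l | ∃ (q : ℕ) (X : Fin q → Set V), IsPathDecomp G X ∧ DecompLengthLE G X l}

/-- The path-breadth `pb(G)`: minimum breadth over all path-decompositions of `G`. -/
noncomputable def pathBreadth (G : SimpleGraph V) : ℕ :=
  sInf {r | ∃ (q : ℕ) (X : Fin q → Set V), IsPathDecomp G X ∧ DecompBreadthLE G X r}

/-- The path-width `pw(G)`: minimum over all path-decompositions of (max bag size − 1). -/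
noncomputable def pathWidth (G : SimpleGraph V) : ℕ :=
  sInf {w | ∃ (q : ℕ) (X : Fin q → Set V), IsPathDecomp G X ∧ ∀ i, (X i).ncard ≤ w + 1}

/-- `f` is a non-contractive embedding of `G` into the line with distortion at most `k`. -/
def IsLineEmbedding (G : SimpleGraph V) (k : ℕ) (f : V → ℝ) : Prop :=
  ∀ x y : V, (G.dist x y : ℝ) ≤ |f x - f y| ∧ |f x - f y| ≤ (k : ℝ) * (G.dist x y : ℝ)

/-- The minimum line-distortion `ld(G)`. -/
noncomputable def lineDistortion (G : SimpleGraph V) : ℕ :=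
  sInf {k | ∃ f : V → ℝ, IsLineEmbedding G k f}

/-- The bandwidth `bw(G)`: minimum over all layouts (bijections of the vertices
with `{0, …, n-1}`) of the maximum stretch of an edge. -/
noncomputable def bandwidth (G : SimpleGraph V) [Fintype V] : ℕ :=
  sInf {b | ∃ f : V ≃ Fin (Fintype.card V),
    ∀ u v : V, G.Adj u v → Nat.dist (f u : ℕ) (f v : ℕ) ≤ b}

/-- Every path of `G` from `a` to `b` meets the disk of radius `lam` around `c`. -/
def Intercepts (G : SimpleGraph V) (lam : ℕ) (c a b : V) : Prop :=
  ∀ p : G.Walk a b, p.IsPath → ∃ z ∈ p.support, G.dist c z ≤ lam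

/-- The walk `p` avoids the closed neighborhood of `c`. -/
def WalkAvoids (G : SimpleGraph V) {x y : V} (p : G.Walk x y) (c : V) : Prop :=
  ∀ z ∈ p.support, z ≠ c ∧ ¬ G.Adj c z

/-- `a, b, c` form an asteroidal triple of `G`: pairwise non-adjacent, and every two
of them are joined by a path avoiding the closed neighborhood of the third. -/
def IsAsteroidalTriple (G : SimpleGraph V) (a b c : V) : Prop :=
  a ≠ b ∧ a ≠ c ∧ b ≠ c ∧ ¬ G.Adj a b ∧ ¬ G.Adj a c ∧ ¬ G.Adj b c ∧
  (∃ p : G.Walk a b, p.IsPath ∧ WalkAvoids G p c) ∧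
  (∃ p : G.Walk a c, p.IsPath ∧ WalkAvoids G p b) ∧
  (∃ p : G.Walk b c, p.IsPath ∧ WalkAvoids G p a)

/-- `G` is AT-free: it has no asteroidal triple. -/
def ATFree (G : SimpleGraph V) : Prop :=
  ∀ a b c : V, ¬ IsAsteroidalTriple G a b c

/-- The `k`-power of `G`: distinct vertices are adjacent iff their distance in `G`
is at most `k`. -/
def powerGraph (G : SimpleGraph V) (k : ℕ) : SimpleGraph V where
  Adj x y := x ≠ y ∧ G.dist x y ≤ k
  symm := by
    constructor
    intro x y h
    exact ⟨h.1.symm, by rw [SimpleGraph.dist_comm]; exact h.2⟩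
  loopless := by
    constructor
    intro x h
    exact h.1 rfl


section Aux
open Classical in
/-- Separator lemma: any walk from a vertex in a bag with index ≤ j to
a vertex in a bag with index ≥ j meets the bag `X j`. -/
lemma sep_lemma {G : SimpleGraph V} {q : ℕ} {X : Fin q → Set V}
    (hdec : IsPathDecomp G X) {j : Fin q} :
    ∀ {x c : V} (w : G.Walk x c), (∃ i, i ≤ j ∧ x ∈ X i) → (∃ k, j ≤ k ∧ c ∈ X k) →
      ∃ z ∈ w.support, z ∈ X j := by
  intro x c w
  induction w with
  | nil =>
    rintro ⟨i, hij, hx⟩ ⟨k, hjk, hxk⟩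
    exact ⟨_, by simp, hdec.2.2 i j k hij hjk ⟨hx, hxk⟩⟩
  | @cons xx yy cc hxy p ih =>
    rintro ⟨i, hij, hx⟩ hR'
    by_cases hR : ∃ k, j ≤ k ∧ xx ∈ X k
    · obtain ⟨k, hjk, hxk⟩ := hR
      exact ⟨_, by simp, hdec.2.2 i j k hij hjk ⟨hx, hxk⟩⟩
    · obtain ⟨m, hxm, hym⟩ := hdec.2.1 _ _ hxy
      rcases le_total m j with hmj | hjm
      · obtain ⟨z, hz, hzX⟩ := ih ⟨m, hmj, hym⟩ hR'
        exact ⟨z, by simp [hz], hzX⟩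
      · exact absurd ⟨m, hjm, hxm⟩ hR

/-- Expand a walk in the power graph into a walk in `G` whose vertices stay
within distance `lam - 1` of the support of the power walk. -/
lemma exists_gwalk {G : SimpleGraph V} (hG : G.Connected) {lam : ℕ} (hlam : 1 ≤ lam)
    {x y : V} (p : (powerGraph G (2 * lam - 1)).Walk x y) :
    ∃ w : G.Walk x y, ∀ z ∈ w.support, ∃ v ∈ p.support, G.dist z v ≤ lam - 1 := by
  classical
  induction p with
  | nil =>
    refine ⟨SimpleGraph.Walk.nil, ?_⟩
    intro z hz
    simp only [SimpleGraph.Walk.support_nil, List.mem_singleton] at hz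
    exact ⟨z, by simp [hz], by simp [hz, SimpleGraph.dist_self]⟩
  | @cons x u y hxu p ih =>
    obtain ⟨w', hw'⟩ := ih
    obtain ⟨g, hg⟩ := hG.exists_walk_length_eq_dist x u
    refine ⟨g.append w', ?_⟩
    intro z hz
    rw [SimpleGraph.Walk.mem_support_append_iff] at hz
    rcases hz with hz | hz
    · -- z on the geodesic from x to u
      have h1 : G.dist x z ≤ (g.takeUntil z hz).length := SimpleGraph.dist_le _
      have h2 : G.dist z u ≤ (g.dropUntil z hz).length := SimpleGraph.dist_le _
      have hsum : (g.takeUntil z hz).length + (g.dropUntil z hz).length = g.length := by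
        have := congrArg SimpleGraph.Walk.length (g.take_spec hz)
        rwa [SimpleGraph.Walk.length_append] at this
      have hdxu : G.dist x u ≤ 2 * lam - 1 := hxu.2
      have hle : G.dist x z + G.dist z u ≤ 2 * lam - 1 := by
        calc G.dist x z + G.dist z u ≤ g.length := by omega
        _ = G.dist x u := hg
        _ ≤ 2 * lam - 1 := hdxu
      rcases le_or_gt (G.dist z x) (lam - 1) with h | h
      · exact ⟨x, by simp, h⟩
      · refine ⟨u, by simp, ?_⟩
        have := SimpleGraph.dist_comm (G := G) (u := x) (v := z)
        omega
    · obtain ⟨v, hv, hvd⟩ := hw' z hz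
      exact ⟨v, by simp [hv], hvd⟩

/-- Key contradiction: if `m`'s bag lies between bags of `a` and `c`, no walk of
the power graph from `a` to `c` can keep all its vertices at `G`-distance ≥ 2λ from `m`. -/
lemma key_lemma {G : SimpleGraph V} (hG : G.Connected) {lam : ℕ} (hlam : 1 ≤ lam)
    {q : ℕ} {X : Fin q → Set V} (hdec : IsPathDecomp G X)
    (hlen : DecompLengthLE G X lam) {a c : V} (m : V)
    {ia ib ic : Fin q} (ha : a ∈ X ia) (hb : m ∈ X ib) (hc : c ∈ X ic)
    (h1 : ia ≤ ib) (h2 : ib ≤ ic)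
    (p : (powerGraph G (2 * lam - 1)).Walk a c)
    (hav : ∀ v ∈ p.support, 2 * lam ≤ G.dist m v) : False := by
  obtain ⟨w, hw⟩ := exists_gwalk hG hlam p
  obtain ⟨z, hz, hzX⟩ := sep_lemma hdec w ⟨ia, h1, ha⟩ ⟨ic, h2, hc⟩
  obtain ⟨v, hv, hvd⟩ := hw z hz
  have hbz : G.dist m z ≤ lam := hlen ib m hb z hzX
  have htri : G.dist m v ≤ G.dist m z + G.dist z v := hG.dist_triangle
  have := hav v hv
  omega

/-- Non-adjacency in the power graph gives distance ≥ 2λ. -/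
lemma dist_ge_of_not_adj {G : SimpleGraph V} {lam : ℕ} (hlam : 1 ≤ lam) {x y : V}
    (hne : x ≠ y) (hna : ¬ (powerGraph G (2 * lam - 1)).Adj x y) :
    2 * lam ≤ G.dist x y := by
  by_contra h
  exact hna ⟨hne, by omega⟩

lemma avoid_dist {G : SimpleGraph V} {lam : ℕ} (hlam : 1 ≤ lam) {x y m : V}
    {p : (powerGraph G (2 * lam - 1)).Walk x y}
    (hav : WalkAvoids (powerGraph G (2 * lam - 1)) p m) :
    ∀ v ∈ p.support, 2 * lam ≤ G.dist m v := by
  intro v hv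
  obtain ⟨hne, hna⟩ := hav v hv
  rw [SimpleGraph.dist_comm]
  exact dist_ge_of_not_adj hlam hne (fun h => hna h.symm)

end Aux

theorem stmt3 [Fintype V] (G : SimpleGraph V) (hG : G.Connected) (lam : ℕ)
    (hlam : 1 ≤ lam) (hpl : pathLength G ≤ lam) :
    ATFree (powerGraph G (2 * lam - 1)) := by
  classical
  -- Extract a path decomposition of length ≤ lam
  have hne : {l | ∃ (q : ℕ) (X : Fin q → Set V), IsPathDecomp G X ∧ DecompLengthLE G X l}.Nonempty := by
    refine ⟨(Finset.univ : Finset (V × V)).sup (fun p => G.dist p.1 p.2), 1,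
      fun _ => Set.univ, ⟨?_, ?_, ?_⟩, ?_⟩
    · intro v; exact ⟨0, Set.mem_univ v⟩
    · intro u v _; exact ⟨0, Set.mem_univ u, Set.mem_univ v⟩
    · intro i j k _ _; intro x _; exact Set.mem_univ x
    · intro i u _ v _
      exact Finset.le_sup (f := fun p : V × V => G.dist p.1 p.2) (Finset.mem_univ (u, v))
  have hmem := Nat.sInf_mem hne
  obtain ⟨q, X, hdec, hlen0⟩ := hmem
  have hlen : DecompLengthLE G X lam := by
    intro i u hu v hv
    exact le_trans (hlen0 i u hu v hv) hpl
  intro a b c hAT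
  obtain ⟨hab, hac, hbc, hnab, hnac, hnbc, ⟨pab, _, pabav⟩, ⟨pac, _, pacav⟩, ⟨pbc, _, pbcav⟩⟩ := hAT
  obtain ⟨ia, ha⟩ := hdec.1 a
  obtain ⟨ib, hb⟩ := hdec.1 b
  obtain ⟨ic, hc⟩ := hdec.1 c
  -- distances between a, b, c are ≥ 2*lam, so no two share a bag; order the indices
  have hdab : ¬ (ia = ib) := by
    intro h
    have := hlen ia a ha b (h ▸ hb)
    have := dist_ge_of_not_adj hlam hab hnab
    omega
  have hdac : ¬ (ia = ic) := by
    intro h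
    have := hlen ia a ha c (h ▸ hc)
    have := dist_ge_of_not_adj hlam hac hnac
    omega
  have hdbc : ¬ (ib = ic) := by
    intro h
    have := hlen ib b hb c (h ▸ hc)
    have := dist_ge_of_not_adj hlam hbc hnbc
    omega
  have havab := avoid_dist hlam pabav
  have havac := avoid_dist hlam pacav
  have havbc := avoid_dist hlam pbcav
  have havab' : ∀ v ∈ pab.reverse.support, 2 * lam ≤ G.dist c v := by
    intro v hv; exact havab v (by simpa using hv)
  have havac' : ∀ v ∈ pac.reverse.support, 2 * lam ≤ G.dist b v := by
    intro v hv; exact havac v (by simpa using hv)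
  have havbc' : ∀ v ∈ pbc.reverse.support, 2 * lam ≤ G.dist a v := by
    intro v hv; exact havbc v (by simpa using hv)
  rcases le_total ia ib with h1 | h1 <;> rcases le_total ib ic with h2 | h2 <;>
    rcases le_total ia ic with h3 | h3
  · exact key_lemma hG hlam hdec hlen b ha hb hc h1 h2 pac havac
  · exact absurd (le_antisymm (le_trans h1 h2) h3) hdac
  · exact key_lemma hG hlam hdec hlen c ha hc hb h3 h2 pab havab
  · exact key_lemma hG hlam hdec hlen a hc ha hb h3 h1 pbc.reverse havbc'
  · exact key_lemma hG hlam hdec hlen a hb ha hc h1 h3 pbc havbc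
  · exact key_lemma hG hlam hdec hlen c hb hc ha h2 h3 pab.reverse havab'
  · exact absurd (le_antisymm h3 (le_trans h2 h1)) hdac
  · exact key_lemma hG hlam hdec hlen b hc hb ha h2 h1 pac.reverse havac'
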